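/- Let G be a graph, F ⊆ E(G), and k ≥ Δ(G) an integer. If G has a proper k-edge-coloring in which all edges of F receive pairwise distinct colors, then G has a proper k-edge-coloring φ in which all edges of F receive distinct colors and, for any two colors i, j ∈ {1,…,k}, the numbers of vertices missing i and missing j differ by at most 5. -/

import Mathlib

open Finset

section AuxWeaklyEquitable

variable {V : Type*} [Fintype V] [DecidableEq V]

private def properEC (G : SimpleGraph V) {k : ℕ} (c : Sym2 V → Fin k) : Prop :=
  ∀ u v w, G.Adj u v → G.Adj u w → v ≠ w → c s(u, v) ≠ c s(u, w)

private def mcount (G : SimpleGraph V) [DecidableRel G.Adj] {k : ℕ}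
    (c : Sym2 V → Fin k) (i : Fin k) : ℕ :=
  (G.edgeFinset.filter fun e => c e = i).card

private lemma two_mul_count (G : SimpleGraph V) [DecidableRel G.Adj] {k : ℕ}
    (c : Sym2 V → Fin k) (i : Fin k) (hp : properEC G c) (T : Finset V)
    (hcl : ∀ u v, G.Adj u v → c s(u, v) = i → (u ∈ T ↔ v ∈ T)) :
    2 * (G.edgeFinset.filter fun e => c e = i ∧ ∀ x ∈ e, x ∈ T).card
      = (T.filter fun v => ∃ w, G.Adj v w ∧ c s(v, w) = i).card := by
  classical
  set Ei := G.edgeFinset.filter fun e => c e = i ∧ ∀ x ∈ e, x ∈ T with hEi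
  have hset : (T.filter fun v => ∃ w, G.Adj v w ∧ c s(v, w) = i)
      = Ei.biUnion (fun e => Finset.univ.filter (· ∈ e)) := by
    ext v
    simp only [mem_filter, mem_biUnion, hEi, mem_univ, true_and]
    constructor
    · rintro ⟨hvT, w, hadj, hc⟩
      refine ⟨s(v, w), ⟨?_, hc, ?_⟩, ?_⟩
      · exact SimpleGraph.mem_edgeFinset.2 hadj
      · intro x hx
        rcases Sym2.mem_iff.1 hx with rfl | rfl
        · exact hvT
        · exact (hcl v x hadj hc).1 hvT
      · exact Sym2.mem_mk_left v w
    · rintro ⟨e, ⟨he, hc, hT⟩, hv⟩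
      refine ⟨hT v hv, ?_⟩
      obtain ⟨w, rfl⟩ := Sym2.mem_iff_exists.1 hv
      exact ⟨w, SimpleGraph.mem_edgeFinset.1 he, hc⟩
  have hdisj : ∀ e ∈ Ei, ∀ f ∈ Ei, e ≠ f →
      Disjoint (Finset.univ.filter (· ∈ e)) (Finset.univ.filter (· ∈ f)) := by
    intro e he f hf hef
    rw [Finset.disjoint_left]
    intro v hve hvf
    simp only [mem_filter, mem_univ, true_and] at hve hvf
    obtain ⟨x, rfl⟩ := Sym2.mem_iff_exists.1 hve
    obtain ⟨y, rfl⟩ := Sym2.mem_iff_exists.1 hvf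
    simp only [hEi, mem_filter, SimpleGraph.mem_edgeFinset, SimpleGraph.mem_edgeSet] at he hf
    have hxy : x ≠ y := fun h => hef (by rw [h])
    exact hp v x y he.1 hf.1 hxy (he.2.1.trans hf.2.1.symm)
  rw [hset, Finset.card_biUnion hdisj]
  have hcard2 : ∀ e ∈ Ei, (Finset.univ.filter (· ∈ e)).card = 2 := by
    intro e he
    simp only [hEi, mem_filter, SimpleGraph.mem_edgeFinset] at he
    have hnd : ¬ e.IsDiag := SimpleGraph.not_isDiag_of_mem_edgeSet G he.1
    induction e using Sym2.ind with
    | _ a b =>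
      have hab : a ≠ b := by simpa using hnd
      have : (Finset.univ.filter (· ∈ s(a, b))) = {a, b} := by
        ext x; simp [Sym2.mem_iff]
      rw [this, Finset.card_insert_of_notMem (by simpa using hab), Finset.card_singleton]
  rw [Finset.sum_congr rfl hcard2, Finset.sum_const, smul_eq_mul, Nat.mul_comm]

private lemma missing_count (G : SimpleGraph V) [DecidableRel G.Adj] {k : ℕ}
    (c : Sym2 V → Fin k) (i : Fin k) (hp : properEC G c) :
    (Finset.univ.filter fun v => ∀ w, G.Adj v w → c s(v, w) ≠ i).card
      + 2 * mcount G c i = Fintype.card V := by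
  classical
  have h1 := two_mul_count G c i hp Finset.univ (fun u v _ _ => by simp)
  have h2 : mcount G c i = (G.edgeFinset.filter fun e => c e = i ∧ ∀ x ∈ e, x ∈ Finset.univ).card := by
    unfold mcount; congr 1; apply Finset.filter_congr; intro e _; simp
  have h3 : (Finset.univ.filter fun v => ∀ w, G.Adj v w → c s(v, w) ≠ i)
      = Finset.univ.filter (fun v => ¬ ∃ w, G.Adj v w ∧ c s(v, w) = i) := by
    apply Finset.filter_congr; intro v _; push_neg; rfl
  rw [h2, h1, h3]
  have := Finset.card_filter_add_card_filter_not
    (s := (Finset.univ : Finset V)) (p := fun v => ∃ w, G.Adj v w ∧ c s(v, w) = i)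
  simp only [Finset.card_univ] at this
  omega

private lemma comp_deg_one (H : SimpleGraph V) [DecidableRel H.Adj]
    (hH2 : ∀ v, H.degree v ≤ 2) (u₀ : V) [DecidablePred (H.Reachable u₀)] :
    ((Finset.univ.filter fun v => H.Reachable u₀ v ∧ H.degree v ≤ 1)).card ≤ 2 := by
  classical
  set S := Finset.univ.filter (fun v => H.Reachable u₀ v) with hS
  have hmemS : ∀ v, v ∈ S ↔ H.Reachable u₀ v := by intro v; simp [hS]
  set ES := H.edgeFinset.filter (fun e => ∀ x ∈ e, x ∈ S) with hES
  -- step 1 : S.card ≤ ES.card + 1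
  have hstep : ∀ v ∈ S.erase u₀, ∃ w, H.Adj w v ∧ H.dist u₀ w + 1 = H.dist u₀ v := by
    intro v hv
    rw [Finset.mem_erase, hmemS] at hv
    obtain ⟨hne, hreach⟩ := hv
    have hd0 : H.dist u₀ v ≠ 0 := by
      rw [SimpleGraph.dist_ne_zero_iff_ne_and_reachable]
      exact ⟨fun h => hne h.symm, hreach⟩
    obtain ⟨p, hp⟩ := SimpleGraph.exists_walk_of_dist_ne_zero hd0
    cases hq : p.reverse with
    | nil =>
      exact absurd (by simp) hd0
    | @cons _ b _ hadj r =>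
      refine ⟨b, hadj.symm, ?_⟩
      have hlen : r.length + 1 = H.dist u₀ v := by
        have := congrArg SimpleGraph.Walk.length hq
        simp [hp] at this
        omega
      have h1 : H.dist u₀ b ≤ r.length := by
        have := SimpleGraph.dist_le r.reverse
        simpa using this
      have h2 : H.dist u₀ v ≤ H.dist u₀ b + 1 := by
        obtain ⟨pw, hpw⟩ := (r.reverse.reachable).exists_walk_length_eq_dist
        have := SimpleGraph.dist_le (pw.concat hadj.symm)
        rw [SimpleGraph.Walk.length_concat, hpw] at this
        exact this
      omega
  -- choice function for the parent edge
  set next : V → V := fun v =>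
    if h : ∃ w, H.Adj w v ∧ H.dist u₀ w + 1 = H.dist u₀ v then h.choose else v with hnext
  have hn : ∀ v ∈ S.erase u₀, H.Adj (next v) v ∧ H.dist u₀ (next v) + 1 = H.dist u₀ v := by
    intro v hv
    have h := hstep v hv
    simp only [hnext, dif_pos h]
    exact h.choose_spec
  have hinj : S.card ≤ ES.card + 1 := by
    have hu₀S : u₀ ∈ S := (hmemS u₀).2 (SimpleGraph.Reachable.refl u₀)
    have hcard : (S.erase u₀).card ≤ ES.card := by
      apply Finset.card_le_card_of_injOn (fun v => s(v, next v))
      · intro v hv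
        obtain ⟨hadj, hdist⟩ := hn v hv
        have hvS : v ∈ S := Finset.mem_of_mem_erase hv
        have hwS : next v ∈ S := by
          rw [hmemS]
          exact ((hmemS v).1 hvS).trans hadj.symm.reachable
        simp only [Finset.mem_coe, hES, Finset.mem_filter, SimpleGraph.mem_edgeFinset,
          SimpleGraph.mem_edgeSet]
        refine ⟨hadj.symm, ?_⟩
        intro x hx
        rcases Sym2.mem_iff.1 hx with rfl | rfl
        · exact hvS
        · exact hwS
      · intro v hv v' hv' heq
        by_contra hne
        rw [Sym2.eq_iff] at heq
        obtain ⟨hadj, hdist⟩ := hn v hv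
        obtain ⟨hadj', hdist'⟩ := hn v' hv'
        rcases heq with ⟨h1, h2⟩ | ⟨h1, h2⟩
        · exact hne h1
        · rw [← h1] at hdist'
          rw [h2] at hdist
          omega
    rw [Finset.card_erase_of_mem hu₀S] at hcard
    omega
  -- restricted graph and handshake
  set H' : SimpleGraph V :=
    { Adj := fun a b => H.Adj a b ∧ a ∈ S ∧ b ∈ S,
      symm := ⟨fun a b ⟨h1, h2, h3⟩ => ⟨h1.symm, h3, h2⟩⟩,
      loopless := ⟨fun a h => H.loopless.irrefl a h.1⟩ } with hH'
  haveI : DecidableRel H'.Adj := fun a b =>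
    inferInstanceAs (Decidable (H.Adj a b ∧ a ∈ S ∧ b ∈ S))
  have hE' : H'.edgeFinset = ES := by
    ext e
    induction e using Sym2.ind with
    | _ a b =>
      simp only [hES, SimpleGraph.mem_edgeFinset, SimpleGraph.mem_edgeSet,
        Finset.mem_filter, hH']
      constructor
      · rintro ⟨h1, h2, h3⟩
        exact ⟨h1, fun x hx => by rcases Sym2.mem_iff.1 hx with rfl | rfl <;> assumption⟩
      · rintro ⟨h1, h2⟩
        exact ⟨h1, h2 a (Sym2.mem_mk_left a b), h2 b (Sym2.mem_mk_right a b)⟩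
  have hhs := SimpleGraph.sum_degrees_eq_twice_card_edges H'
  have hdeg0 : ∀ v ∉ S, H'.degree v = 0 := by
    intro v hv
    rw [SimpleGraph.degree, Finset.card_eq_zero, Finset.eq_empty_iff_forall_notMem]
    intro w hw
    rw [SimpleGraph.mem_neighborFinset] at hw
    exact hv hw.2.1
  have hdegle : ∀ v, H'.degree v ≤ H.degree v := by
    intro v
    apply Finset.card_le_card
    intro w hw
    rw [SimpleGraph.mem_neighborFinset] at hw ⊢
    exact hw.1
  have hsumS : ∑ v ∈ S, H'.degree v = 2 * ES.card := by
    rw [← hE', ← hhs]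
    exact Finset.sum_subset (Finset.subset_univ S) (fun v _ hv => hdeg0 v hv)
  have hsum_le : 2 * ES.card ≤ ∑ v ∈ S, H.degree v := by
    rw [← hsumS]
    exact Finset.sum_le_sum fun v _ => hdegle v
  -- final arithmetic
  have hTeq : (Finset.univ.filter fun v => H.Reachable u₀ v ∧ H.degree v ≤ 1)
      = S.filter (fun v => H.degree v ≤ 1) := by
    ext v; simp [hS, and_assoc]
  rw [hTeq]
  set c1 := (S.filter (fun v => H.degree v ≤ 1)).card with hc1
  set c2 := (S.filter (fun v => ¬ H.degree v ≤ 1)).card with hc2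
  have hsplit : c1 + c2 = S.card := Finset.card_filter_add_card_filter_not _
  have hb : ∑ v ∈ S, H.degree v ≤ c1 + 2 * c2 := by
    rw [← Finset.sum_filter_add_sum_filter_not S (fun v => H.degree v ≤ 1)]
    have b1 : ∑ v ∈ S.filter (fun v => H.degree v ≤ 1), H.degree v ≤ c1 := by
      rw [hc1, Finset.card_eq_sum_ones]
      exact Finset.sum_le_sum fun v hv => (Finset.mem_filter.1 hv).2
    have b2 : ∑ v ∈ S.filter (fun v => ¬ H.degree v ≤ 1), H.degree v ≤ 2 * c2 := by
      calc ∑ v ∈ S.filter (fun v => ¬ H.degree v ≤ 1), H.degree v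
          ≤ ∑ _v ∈ S.filter (fun v => ¬ H.degree v ≤ 1), 2 :=
            Finset.sum_le_sum fun v _ => hH2 v
        _ = 2 * c2 := by rw [Finset.sum_const, smul_eq_mul, Nat.mul_comm, hc2]
    omega
  omega

private lemma swap_lemma (G : SimpleGraph V) [DecidableRel G.Adj] {k : ℕ}
    (c : Sym2 V → Fin k) (F : Finset (Sym2 V)) (hF : F ⊆ G.edgeFinset)
    (hp : properEC G c) (hd : ∀ e ∈ F, ∀ f ∈ F, e ≠ f → c e ≠ c f) {i j : Fin k}
    (hij : i ≠ j) (hgap : mcount G c j + 3 ≤ mcount G c i) :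
    ∃ c' : Sym2 V → Fin k, properEC G c' ∧ (∀ e ∈ F, ∀ f ∈ F, e ≠ f → c' e ≠ c' f) ∧
      mcount G c' i + 1 = mcount G c i ∧ mcount G c' j = mcount G c j + 1 ∧
      ∀ l, l ≠ i → l ≠ j → mcount G c' l = mcount G c l := by
  classical
  -- the (i,j)-subgraph
  set H : SimpleGraph V :=
    { Adj := fun u v => G.Adj u v ∧ (c s(u, v) = i ∨ c s(u, v) = j),
      symm := ⟨fun u v ⟨h1, h2⟩ => ⟨h1.symm, by rwa [Sym2.eq_swap]⟩⟩,
      loopless := ⟨fun v h => G.loopless.irrefl v h.1⟩ } with hH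
  haveI : DecidableRel H.Adj := fun u v =>
    inferInstanceAs (Decidable (G.Adj u v ∧ (c s(u, v) = i ∨ c s(u, v) = j)))
  have hHadj : ∀ u v, H.Adj u v ↔ G.Adj u v ∧ (c s(u, v) = i ∨ c s(u, v) = j) :=
    fun u v => Iff.rfl
  -- degrees in H
  have hH2 : ∀ v, H.degree v ≤ 2 := by
    intro v
    have : H.neighborFinset v ⊆ Finset.univ.filter
        (fun w => H.Adj v w) := by intro w; simp [SimpleGraph.mem_neighborFinset]
    rw [SimpleGraph.degree]
    calc (H.neighborFinset v).card
        ≤ ({i, j} : Finset (Fin k)).card := by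
          apply Finset.card_le_card_of_injOn (fun w => c s(v, w))
          · intro w hw
            simp only [Finset.mem_coe, SimpleGraph.mem_neighborFinset] at hw
            rcases hw.2 with h | h <;> simp [h]
          · intro w hw w' hw' heq
            simp only [Finset.mem_coe, SimpleGraph.mem_neighborFinset] at hw hw'
            by_contra hne
            exact hp v w w' hw.1 hw'.1 hne heq
      _ ≤ 2 := Finset.card_insert_le _ _ |>.trans (by simp)
  -- the sets of "surplus" endpoints
  set A := Finset.univ.filter (fun v =>
    (∃ w, G.Adj v w ∧ c s(v, w) = i) ∧ ∀ w, G.Adj v w → c s(v, w) ≠ j) with hA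
  set B := Finset.univ.filter (fun v =>
    (∃ w, G.Adj v w ∧ c s(v, w) = j) ∧ ∀ w, G.Adj v w → c s(v, w) ≠ i) with hB
  have hdeg1 : ∀ v ∈ A ∪ B, H.degree v ≤ 1 := by
    intro v hv
    rw [Finset.mem_union, hA, hB, Finset.mem_filter, Finset.mem_filter] at hv
    rw [SimpleGraph.degree, Finset.card_le_one]
    intro w hw w' hw'
    simp only [SimpleGraph.mem_neighborFinset] at hw hw'
    by_contra hne
    have hcc : c s(v, w) ≠ c s(v, w') := hp v w w' hw.1 hw'.1 hne
    have hone : ∀ x, H.Adj v x → c s(v, x) = i ∨ c s(v, x) = j := fun x hx => hx.2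
    rcases hv with ⟨_, ⟨_, hnotj⟩⟩ | ⟨_, ⟨_, hnoti⟩⟩
    · rcases hone w hw with h1 | h1
      · rcases hone w' hw' with h2 | h2
        · exact hcc (h1.trans h2.symm)
        · exact hnotj w' hw'.1 h2
      · exact hnotj w hw.1 h1
    · rcases hone w hw with h1 | h1
      · exact hnoti w hw.1 h1
      · rcases hone w' hw' with h2 | h2
        · exact hnoti w' hw'.1 h2
        · exact hcc (h1.trans h2.symm)
  have hABdisj : ∀ v, v ∈ A → v ∈ B → False := by
    intro v hvA hvB
    rw [hA, Finset.mem_filter] at hvA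
    rw [hB, Finset.mem_filter] at hvB
    obtain ⟨w, hw, hcw⟩ := hvB.2.1
    exact hvA.2.2 w hw hcw
  -- counting `A` and `B`
  have hXl : ∀ l : Fin k,
      (Finset.univ.filter (fun v => ∃ w, G.Adj v w ∧ c s(v, w) = l)).card
        = 2 * mcount G c l := by
    intro l
    rw [← two_mul_count G c l hp Finset.univ (fun u v _ _ => by simp)]
    congr 1
    unfold mcount
    congr 1
    apply Finset.filter_congr
    intro e _
    simp
  have hcardA : A.card + (Finset.univ.filter (fun v =>
      (∃ w, G.Adj v w ∧ c s(v, w) = i) ∧ (∃ w, G.Adj v w ∧ c s(v, w) = j))).card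
      = 2 * mcount G c i := by
    rw [← hXl i]
    have e1 : A = (Finset.univ.filter (fun v => ∃ w, G.Adj v w ∧ c s(v, w) = i)).filter
        (fun v => ¬ ∃ w, G.Adj v w ∧ c s(v, w) = j) := by
      rw [hA, Finset.filter_filter]
      apply Finset.filter_congr
      intro v _
      constructor
      · rintro ⟨h1, h2⟩; exact ⟨h1, fun ⟨w, hw, hcw⟩ => h2 w hw hcw⟩
      · rintro ⟨h1, h2⟩; exact ⟨h1, fun w hw hcw => h2 ⟨w, hw, hcw⟩⟩
    have e2 : (Finset.univ.filter (fun v =>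
        (∃ w, G.Adj v w ∧ c s(v, w) = i) ∧ (∃ w, G.Adj v w ∧ c s(v, w) = j)))
        = (Finset.univ.filter (fun v => ∃ w, G.Adj v w ∧ c s(v, w) = i)).filter
        (fun v => ∃ w, G.Adj v w ∧ c s(v, w) = j) := by
      rw [Finset.filter_filter]
    rw [e1, e2]
    rw [Nat.add_comm]
    exact Finset.card_filter_add_card_filter_not _
  have hcardB : B.card + (Finset.univ.filter (fun v =>
      (∃ w, G.Adj v w ∧ c s(v, w) = i) ∧ (∃ w, G.Adj v w ∧ c s(v, w) = j))).card
      = 2 * mcount G c j := by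
    rw [← hXl j]
    have e1 : B = (Finset.univ.filter (fun v => ∃ w, G.Adj v w ∧ c s(v, w) = j)).filter
        (fun v => ¬ ∃ w, G.Adj v w ∧ c s(v, w) = i) := by
      rw [hB, Finset.filter_filter]
      apply Finset.filter_congr
      intro v _
      constructor
      · rintro ⟨h1, h2⟩; exact ⟨h1, fun ⟨w, hw, hcw⟩ => h2 w hw hcw⟩
      · rintro ⟨h1, h2⟩; exact ⟨h1, fun w hw hcw => h2 ⟨w, hw, hcw⟩⟩
    have e2 : (Finset.univ.filter (fun v =>
        (∃ w, G.Adj v w ∧ c s(v, w) = i) ∧ (∃ w, G.Adj v w ∧ c s(v, w) = j)))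
        = (Finset.univ.filter (fun v => ∃ w, G.Adj v w ∧ c s(v, w) = j)).filter
        (fun v => ∃ w, G.Adj v w ∧ c s(v, w) = i) := by
      rw [Finset.filter_filter]
      apply Finset.filter_congr
      intro v _
      exact and_comm
    rw [e1, e2, Nat.add_comm]
    exact Finset.card_filter_add_card_filter_not _
  have hab : B.card + 6 ≤ A.card := by omega
  -- connected components of H
  set κ := H.connectedComponentMk with hκ
  have hκR : ∀ u v, κ u = κ v ↔ H.Reachable u v := fun u v => SimpleGraph.ConnectedComponent.eq
  have hfib : ∀ u₀ : V, ((A ∪ B).filter (fun v => κ v = κ u₀)).card ≤ 2 := by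
    intro u₀
    calc ((A ∪ B).filter (fun v => κ v = κ u₀)).card
        ≤ ((Finset.univ.filter fun v => H.Reachable u₀ v ∧ H.degree v ≤ 1)).card := by
          apply Finset.card_le_card
          intro v hv
          rw [Finset.mem_filter] at hv
          rw [Finset.mem_filter]
          exact ⟨Finset.mem_univ v, ((hκR v u₀).1 hv.2).symm, hdeg1 v hv.1⟩
      _ ≤ 2 := comp_deg_one H hH2 u₀
  set P1 := (A.image κ) \ (B.image κ) with hP1
  have hA1 : (A.filter (fun v => κ v ∈ P1)).card ≤ 2 * P1.card := by
    calc (A.filter (fun v => κ v ∈ P1)).card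
        ≤ 2 * ((A.filter (fun v => κ v ∈ P1)).image κ).card := by
          apply Finset.card_le_mul_card_image
          intro b hb
          rw [Finset.mem_image] at hb
          obtain ⟨a, ha, rfl⟩ := hb
          calc ((A.filter (fun v => κ v ∈ P1)).filter (fun x => κ x = κ a)).card
              ≤ ((A ∪ B).filter (fun v => κ v = κ a)).card := by
                apply Finset.card_le_card
                intro v hv
                simp only [Finset.mem_filter] at hv ⊢
                exact ⟨Finset.mem_union_left _ hv.1.1, hv.2⟩
            _ ≤ 2 := hfib a
      _ ≤ 2 * P1.card := by
          apply Nat.mul_le_mul_left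
          apply Finset.card_le_card
          intro K hK
          rw [Finset.mem_image] at hK
          obtain ⟨a, ha, rfl⟩ := hK
          exact (Finset.mem_filter.1 ha).2
  have hA2 : (A.filter (fun v => ¬ κ v ∈ P1)).card ≤ B.card := by
    have hex : ∀ a ∈ A.filter (fun v => ¬ κ v ∈ P1), ∃ b, b ∈ B ∧ κ b = κ a := by
      intro a ha
      rw [Finset.mem_filter] at ha
      have h1 : κ a ∈ A.image κ := Finset.mem_image_of_mem κ ha.1
      have h2 : κ a ∈ B.image κ := by
        by_contra h2
        exact ha.2 (Finset.mem_sdiff.2 ⟨h1, h2⟩)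
      rw [Finset.mem_image] at h2
      obtain ⟨b, hb, hbe⟩ := h2
      exact ⟨b, hb, hbe⟩
    apply Finset.card_le_card_of_injOn (fun a =>
      if h : ∃ b, b ∈ B ∧ κ b = κ a then h.choose else a)
    · intro a ha
      have h := hex a ha
      simp only [dif_pos h]
      exact (h.choose_spec).1
    · intro a ha' a' ha'' heq
      simp only [Finset.mem_coe] at ha' ha''
      have h1 := hex a ha'
      have h2 := hex a' ha''
      simp only [dif_pos h1, dif_pos h2] at heq
      by_contra hne
      -- a, a', b all in component of a, with b ∈ B, a a' ∈ A
      set b := h1.choose with hb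
      have hb1 : b ∈ B ∧ κ b = κ a := h1.choose_spec
      have hb2 : h2.choose ∈ B ∧ κ h2.choose = κ a' := h2.choose_spec
      have hbb : κ b = κ a' := by rw [heq]; exact hb2.2
      have haA : a ∈ A := (Finset.mem_filter.1 ha').1
      have haA' : a' ∈ A := (Finset.mem_filter.1 ha'').1
      have hsub : ({a, a', b} : Finset V) ⊆ (A ∪ B).filter (fun v => κ v = κ a) := by
        intro x hx
        simp only [Finset.mem_insert, Finset.mem_singleton] at hx
        rw [Finset.mem_filter]
        rcases hx with rfl | rfl | rfl
        · exact ⟨Finset.mem_union_left _ haA, rfl⟩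
        · exact ⟨Finset.mem_union_left _ haA', by rw [← hbb, hb1.2]⟩
        · exact ⟨Finset.mem_union_right _ hb1.1, hb1.2⟩
      have hba : b ≠ a := fun h => hABdisj a (haA) (h ▸ hb1.1)
      have hba' : b ≠ a' := fun h => hABdisj a' (haA') (h ▸ hb1.1)
      have hc3 : ({a, a', b} : Finset V).card = 3 := by
        rw [Finset.card_insert_of_notMem (by simp [hne, hba.symm]),
          Finset.card_insert_of_notMem (by simp [hba'.symm]), Finset.card_singleton]
      have := Finset.card_le_card hsub
      rw [hc3] at this
      have := hfib a
      omega
  have hP1card : 3 ≤ P1.card := by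
    have hsplit := Finset.card_filter_add_card_filter_not
      (s := A) (p := fun v => κ v ∈ P1)
    omega
  -- bad components coming from F
  have hrepex : ∀ e : Sym2 V, ∃ x, x ∈ e := fun e => by
    induction e using Sym2.ind with
    | _ a b => exact ⟨a, Sym2.mem_mk_left a b⟩
  set rep : Sym2 V → V := fun e => (hrepex e).choose with hrep
  have hrepmem : ∀ e : Sym2 V, rep e ∈ e := fun e => (hrepex e).choose_spec
  set Fij := F.filter (fun e => c e = i ∨ c e = j) with hFij
  have hFij2 : Fij.card ≤ 2 := by
    calc Fij.card ≤ ({i, j} : Finset (Fin k)).card := by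
          apply Finset.card_le_card_of_injOn c
          · intro e he
            rcases (Finset.mem_filter.1 he).2 with h | h <;> simp [h]
          · intro e he f hf' heq
            simp only [Finset.mem_coe, hFij, Finset.mem_filter] at he hf'
            by_contra hne
            exact hd e he.1 f hf'.1 hne heq
      _ ≤ 2 := Finset.card_insert_le _ _ |>.trans (by simp)
  set Fbad := Fij.image (fun e => κ (rep e)) with hFbad
  have hFbad2 : Fbad.card ≤ 2 := le_trans (Finset.card_image_le) hFij2
  -- pick a good component and a root u₀ in it
  have hgood : (P1 \ Fbad).Nonempty := by
    rw [← Finset.card_pos]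
    have := Finset.le_card_sdiff Fbad P1
    omega
  obtain ⟨K, hK⟩ := hgood
  rw [Finset.mem_sdiff] at hK
  have hKP1 := hK.1
  rw [hP1, Finset.mem_sdiff] at hKP1
  obtain ⟨u₀, hu₀A, hu₀K⟩ := Finset.mem_image.1 hKP1.1
  -- the component of u₀
  set R : V → Prop := fun v => H.Reachable u₀ v with hR
  have hRK : ∀ v, R v ↔ κ v = K := by
    intro v
    rw [← hu₀K]
    exact ⟨fun h => (hκR v u₀).2 h.symm, fun h => ((hκR v u₀).1 h).symm⟩
  have hnoB : ∀ v, R v → v ∉ B := by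
    intro v hv hvB
    exact hKP1.2 (Finset.mem_image.2 ⟨v, hvB, (hRK v).1 hv⟩)
  have hnoF : ∀ e ∈ F, (c e = i ∨ c e = j) → ∀ x ∈ e, ¬ R x := by
    intro e heF hce x hxe hRx
    have heFij : e ∈ Fij := Finset.mem_filter.2 ⟨heF, hce⟩
    have heE : e ∈ G.edgeFinset := hF heF
    have hκeq : κ (rep e) = κ x := by
      have hmem := hrepmem e
      revert hmem hxe hce heE
      induction e using Sym2.ind with
      | _ a b =>
        intro hce hxe heE hmem
        have hadj : H.Adj a b :=
          ⟨G.mem_edgeSet.1 (SimpleGraph.mem_edgeFinset.1 heE), hce⟩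
        have hab : κ a = κ b := (hκR a b).2 hadj.reachable
        rcases Sym2.mem_iff.1 hmem with h1 | h1 <;> rcases Sym2.mem_iff.1 hxe with h2 | h2 <;>
          rw [h1, h2] <;> simp [hab]
    apply hK.2
    rw [hFbad]
    exact Finset.mem_image.2 ⟨e, heFij, by rw [hκeq, (hRK x).1 hRx]⟩
  -- every vertex of the component has an i-edge
  have hSi : ∀ v, R v → ∃ w, G.Adj v w ∧ c s(v, w) = i := by
    intro v hRv
    by_contra hni
    push_neg at hni
    have hvB : (∃ w, G.Adj v w ∧ c s(v, w) = j) → False := by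
      intro hj
      exact hnoB v hRv (by rw [hB, Finset.mem_filter]; exact ⟨Finset.mem_univ v, hj, hni⟩)
    by_cases hvu : v = u₀
    · subst hvu
      rw [hA, Finset.mem_filter] at hu₀A
      obtain ⟨w, hw1, hw2⟩ := hu₀A.2.1
      exact hni w hw1 hw2
    · obtain ⟨p⟩ := hRv
      cases hq : p.reverse with
      | nil => exact hvu rfl
      | @cons _ b _ hadj r =>
        rcases hadj.2 with h | h
        · exact hni b hadj.1 h
        · exact hvB ⟨b, hadj.1, h⟩
  have hSj : ∀ v, R v → (∀ w, G.Adj v w → c s(v, w) ≠ j) → v ∈ A := by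
    intro v hRv hnj
    rw [hA, Finset.mem_filter]
    exact ⟨Finset.mem_univ v, hSi v hRv, hnj⟩
  -- the vertex set of the component
  set S := Finset.univ.filter (fun v => R v) with hSdef
  have hmemS : ∀ v, v ∈ S ↔ R v := by intro v; simp [hSdef]
  set SA := A.filter (fun v => R v) with hSA
  have hSAcard : 1 ≤ SA.card ∧ SA.card ≤ 2 := by
    constructor
    · rw [Finset.one_le_card]
      exact ⟨u₀, Finset.mem_filter.2 ⟨hu₀A, SimpleGraph.Reachable.refl u₀⟩⟩
    · calc SA.card ≤ ((A ∪ B).filter (fun v => κ v = κ u₀)).card := by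
            apply Finset.card_le_card
            intro v hv
            rw [hSA, Finset.mem_filter] at hv
            refine Finset.mem_filter.2 ⟨Finset.mem_union_left _ hv.1, ?_⟩
            rw [hu₀K]
            exact (hRK v).1 hv.2
        _ ≤ 2 := hfib u₀
  -- counting edges of colors i and j inside the component
  have hcli : ∀ u v, G.Adj u v → c s(u, v) = i → (u ∈ S ↔ v ∈ S) := by
    intro u v huv hc
    have hadj : H.Adj u v := ⟨huv, Or.inl hc⟩
    rw [hmemS, hmemS]
    exact ⟨fun h => h.trans hadj.reachable, fun h => h.trans hadj.symm.reachable⟩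
  have hclj : ∀ u v, G.Adj u v → c s(u, v) = j → (u ∈ S ↔ v ∈ S) := by
    intro u v huv hc
    have hadj : H.Adj u v := ⟨huv, Or.inr hc⟩
    rw [hmemS, hmemS]
    exact ⟨fun h => h.trans hadj.reachable, fun h => h.trans hadj.symm.reachable⟩
  set ai := (G.edgeFinset.filter fun e => c e = i ∧ ∀ x ∈ e, x ∈ S).card with hai
  set bj := (G.edgeFinset.filter fun e => c e = j ∧ ∀ x ∈ e, x ∈ S).card with hbj
  have h2ai : 2 * ai = S.card := by
    rw [hai, two_mul_count G c i hp S hcli]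
    congr 1
    apply Finset.filter_true_of_mem
    intro v hv
    exact hSi v ((hmemS v).1 hv)
  have h2bj : 2 * bj + SA.card = S.card := by
    rw [hbj, two_mul_count G c j hp S hclj]
    have e1 : S.filter (fun v => ∃ w, G.Adj v w ∧ c s(v, w) = j)
        = S.filter (fun v => v ∉ A) := by
      apply Finset.filter_congr
      intro v hv
      constructor
      · rintro ⟨w, hw, hcw⟩ hvA
        rw [hA, Finset.mem_filter] at hvA
        exact hvA.2.2 w hw hcw
      · intro hvA
        by_contra hno
        push_neg at hno
        exact hvA (hSj v ((hmemS v).1 hv) hno)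
    have e2 : S.filter (fun v => v ∈ A) = SA := by
      rw [hSA]
      ext v
      simp only [Finset.mem_filter, hmemS]
      tauto
    have := Finset.card_filter_add_card_filter_not (s := S) (p := fun v => v ∈ A)
    rw [e2] at this
    rw [e1]
    omega
  have haibj : ai = bj + 1 := by omega
  -- the recoloring
  set Q : Sym2 V → Prop := fun e => (c e = i ∨ c e = j) ∧ ∃ x ∈ e, x ∈ S with hQ
  set c' : Sym2 V → Fin k :=
    fun e => if e ∈ G.edgeFinset ∧ Q e then (if c e = i then j else i) else c e with hc'
  -- basic facts about c'
  have hkey : ∀ u v, G.Adj u v → (c s(u, v) = i ∨ c s(u, v) = j) →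
      ((∃ x ∈ s(u, v), x ∈ S) ↔ u ∈ S) := by
    intro u v huv hcuv
    have hadj : H.Adj u v := ⟨huv, hcuv⟩
    constructor
    · rintro ⟨x, hx, hxS⟩
      rcases Sym2.mem_iff.1 hx with rfl | rfl
      · exact hxS
      · rw [hmemS] at hxS ⊢
        exact hxS.trans hadj.symm.reachable
    · intro h
      exact ⟨u, Sym2.mem_mk_left u v, h⟩
  have hswapval : ∀ e ∈ G.edgeFinset, Q e → c' e = (if c e = i then j else i) := by
    intro e he hQe
    rw [hc']
    simp only [if_pos (⟨he, hQe⟩ : e ∈ G.edgeFinset ∧ Q e)]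
  have hstay1 : ∀ e, ¬(c e = i ∨ c e = j) → c' e = c e := by
    intro e hne
    rw [hc']
    simp only
    rw [if_neg]
    rintro ⟨_, hQe, _⟩
    exact hne hQe
  have hstay3 : ∀ e, ¬ (∃ x ∈ e, x ∈ S) → c' e = c e := by
    intro e hne
    rw [hc']
    simp only
    rw [if_neg]
    rintro ⟨_, _, hex⟩
    exact hne hex
  have hin : ∀ e, (c e = i ∨ c e = j) → (c' e = i ∨ c' e = j) := by
    intro e hce
    rw [hc']
    simp only
    by_cases h : e ∈ G.edgeFinset ∧ Q e
    · rw [if_pos h]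
      by_cases hci : c e = i
      · rw [if_pos hci]; exact Or.inr rfl
      · rw [if_neg hci]; exact Or.inl rfl
    · rw [if_neg h]; exact hce
  -- properness of c'
  have hp' : properEC G c' := by
    intro u v w huv huw hvw
    have hne := hp u v w huv huw hvw
    by_cases h1 : c s(u, v) = i ∨ c s(u, v) = j
    · by_cases h2 : c s(u, w) = i ∨ c s(u, w) = j
      · by_cases hr : u ∈ S
        · rw [hswapval _ (SimpleGraph.mem_edgeFinset.2 huv) ⟨h1, (hkey u v huv h1).2 hr⟩,
            hswapval _ (SimpleGraph.mem_edgeFinset.2 huw) ⟨h2, (hkey u w huw h2).2 hr⟩]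
          rcases h1 with h1 | h1 <;> rcases h2 with h2 | h2
          · exact absurd (h1.trans h2.symm) hne
          · rw [if_pos h1, if_neg (by rw [h2]; exact fun hh => hij hh.symm)]
            exact fun hh => hij hh.symm
          · rw [if_neg (by rw [h1]; exact fun hh => hij hh.symm), if_pos h2]
            exact hij
          · exact absurd (h1.trans h2.symm) hne
        · rw [hstay3 _ (fun hx => hr ((hkey u v huv h1).1 hx)),
            hstay3 _ (fun hx => hr ((hkey u w huw h2).1 hx))]
          exact hne
      · rw [hstay1 _ h2]
        intro heq
        exact h2 (heq ▸ hin _ h1)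
    · rw [hstay1 _ h1]
      by_cases h2 : c s(u, w) = i ∨ c s(u, w) = j
      · intro heq
        exact h1 (heq.symm ▸ hin _ h2)
      · rw [hstay1 _ h2]
        exact hne
  -- F is recolored identically
  have hFfix : ∀ e ∈ F, c' e = c e := by
    intro e heF
    by_cases hce : c e = i ∨ c e = j
    · apply hstay3
      rintro ⟨x, hx, hxS⟩
      exact hnoF e heF hce x hx ((hmemS x).1 hxS)
    · exact hstay1 e hce
  have hd' : ∀ e ∈ F, ∀ f ∈ F, e ≠ f → c' e ≠ c' f := by
    intro e he f hf hef
    rw [hFfix e he, hFfix f hf]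
    exact hd e he f hf hef
  -- counting the color classes of c'
  have hsplitm : ∀ (d : Sym2 V → Fin k) (l : Fin k), mcount G d l
      = (G.edgeFinset.filter (fun e => d e = l ∧ Q e)).card
        + (G.edgeFinset.filter (fun e => d e = l ∧ ¬ Q e)).card := by
    intro d l
    unfold mcount
    rw [← Finset.card_filter_add_card_filter_not
      (s := G.edgeFinset.filter (fun e => d e = l)) (p := Q), Finset.filter_filter,
      Finset.filter_filter]
  have hforall : ∀ e ∈ G.edgeFinset, (c e = i ∨ c e = j) →
      ((∃ x ∈ e, x ∈ S) ↔ (∀ x ∈ e, x ∈ S)) := by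
    intro e he hce
    revert he hce
    induction e using Sym2.ind with
    | _ a b =>
      intro he hce
      have hadj : H.Adj a b := ⟨G.mem_edgeSet.1 (SimpleGraph.mem_edgeFinset.1 he), hce⟩
      have hiff : a ∈ S ↔ b ∈ S := by
        rw [hmemS, hmemS]
        exact ⟨fun h => h.trans hadj.reachable, fun h => h.trans hadj.symm.reachable⟩
      constructor
      · rintro ⟨x, hx, hxS⟩ y hy
        rcases Sym2.mem_iff.1 hx with rfl | rfl <;> rcases Sym2.mem_iff.1 hy with rfl | rfl
        · exact hxS
        · exact hiff.1 hxS
        · exact hiff.2 hxS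
        · exact hxS
      · intro h
        exact ⟨a, Sym2.mem_mk_left a b, h a (Sym2.mem_mk_left a b)⟩
  have hcards : ∀ l : Fin k, (G.edgeFinset.filter (fun e => c' e = l ∧ ¬ Q e)).card
      = (G.edgeFinset.filter (fun e => c e = l ∧ ¬ Q e)).card := by
    intro l
    congr 1
    apply Finset.filter_congr
    intro e he
    by_cases hQe : Q e
    · exact ⟨fun h => (h.2 hQe).elim, fun h => (h.2 hQe).elim⟩
    · have hcc : c' e = c e := by
        rw [hc']
        exact if_neg (fun h => hQe h.2)
      rw [hcc]
  have hQswap : ∀ e ∈ G.edgeFinset, Q e → ((c' e = i ↔ c e = j) ∧ (c' e = j ↔ c e = i)) := by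
    intro e he hQe
    have hv := hswapval e he hQe
    rcases hQe.1 with h | h
    · rw [hv, if_pos h, h]
      exact ⟨eq_comm, by simp⟩
    · have hni : ¬ c e = i := by rw [h]; exact fun hh => hij hh.symm
      rw [hv, if_neg hni, h]
      exact ⟨by simp, eq_comm⟩
  have hQcard_i : (G.edgeFinset.filter (fun e => c e = i ∧ Q e)).card = ai := by
    rw [hai]
    congr 1
    apply Finset.filter_congr
    intro e he
    by_cases hci : c e = i
    · simp only [hci, true_and]
      rw [hQ]
      simp only [hci, true_or, true_and]
      exact hforall e he (Or.inl hci)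
    · exact ⟨fun h => (hci h.1).elim, fun h => (hci h.1).elim⟩
  have hQcard_j : (G.edgeFinset.filter (fun e => c e = j ∧ Q e)).card = bj := by
    rw [hbj]
    congr 1
    apply Finset.filter_congr
    intro e he
    by_cases hcj : c e = j
    · simp only [hcj, true_and]
      rw [hQ]
      simp only [hcj, or_true, true_and]
      exact hforall e he (Or.inr hcj)
    · exact ⟨fun h => (hcj h.1).elim, fun h => (hcj h.1).elim⟩
  have hQcard_i' : (G.edgeFinset.filter (fun e => c' e = i ∧ Q e)).card = bj := by
    rw [← hQcard_j]
    congr 1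
    apply Finset.filter_congr
    intro e he
    by_cases hQe : Q e
    · exact and_congr_left' (hQswap e he hQe).1
    · exact ⟨fun h => (hQe h.2).elim, fun h => (hQe h.2).elim⟩
  have hQcard_j' : (G.edgeFinset.filter (fun e => c' e = j ∧ Q e)).card = ai := by
    rw [← hQcard_i]
    congr 1
    apply Finset.filter_congr
    intro e he
    by_cases hQe : Q e
    · exact and_congr_left' (hQswap e he hQe).2
    · exact ⟨fun h => (hQe h.2).elim, fun h => (hQe h.2).elim⟩
  refine ⟨c', hp', hd', ?_, ?_, ?_⟩
  · rw [hsplitm c' i, hsplitm c i, hQcard_i', hQcard_i, hcards i]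
    omega
  · rw [hsplitm c' j, hsplitm c j, hQcard_j', hQcard_j, hcards j]
    omega
  · intro l hli hlj
    rw [hsplitm c' l, hsplitm c l, hcards l]
    have hz1 : (G.edgeFinset.filter (fun e => c' e = l ∧ Q e)).card = 0 := by
      rw [Finset.card_eq_zero, Finset.filter_eq_empty_iff]
      rintro e he ⟨hcl, hQe⟩
      rcases hin e hQe.1 with h | h
      · exact hli (hcl.symm.trans h)
      · exact hlj (hcl.symm.trans h)
    have hz2 : (G.edgeFinset.filter (fun e => c e = l ∧ Q e)).card = 0 := by
      rw [Finset.card_eq_zero, Finset.filter_eq_empty_iff]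
      rintro e he ⟨hcl, hQe⟩
      rcases hQe.1 with h | h
      · exact hli (hcl.symm.trans h)
      · exact hlj (hcl.symm.trans h)
    omega





private lemma balance (G : SimpleGraph V) [DecidableRel G.Adj] {k : ℕ}
    (F : Finset (Sym2 V)) (hF : F ⊆ G.edgeFinset) (c₀ : Sym2 V → Fin k)
    (hp₀ : properEC G c₀) (hd₀ : ∀ e ∈ F, ∀ f ∈ F, e ≠ f → c₀ e ≠ c₀ f) :
    ∃ c : Sym2 V → Fin k, properEC G c ∧ (∀ e ∈ F, ∀ f ∈ F, e ≠ f → c e ≠ c f) ∧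
      ∀ i j : Fin k, mcount G c i ≤ mcount G c j + 2 := by
  classical
  rcases isEmpty_or_nonempty (Fin k) with hk | hk
  · exact ⟨c₀, hp₀, hd₀, fun i => (hk.false i).elim⟩
  suffices h : ∀ (n : ℕ) (c : Sym2 V → Fin k), properEC G c →
      (∀ e ∈ F, ∀ f ∈ F, e ≠ f → c e ≠ c f) →
      (∑ l : Fin k, (mcount G c l) ^ 2) ≤ n →
      ∃ c' : Sym2 V → Fin k, properEC G c' ∧ (∀ e ∈ F, ∀ f ∈ F, e ≠ f → c' e ≠ c' f) ∧
        ∀ i j : Fin k, mcount G c' i ≤ mcount G c' j + 2 by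
    exact h (∑ l : Fin k, (mcount G c₀ l) ^ 2) c₀ hp₀ hd₀ le_rfl
  intro n
  induction n with
  | zero =>
    intro c hp hd hΦ
    refine ⟨c, hp, hd, fun i j => ?_⟩
    have h1 : (mcount G c i) ^ 2 ≤ 0 := le_trans (Finset.single_le_sum
      (f := fun l => (mcount G c l) ^ 2) (fun l _ => Nat.zero_le _) (Finset.mem_univ i)) hΦ
    have : mcount G c i = 0 := by nlinarith [sq_nonneg (mcount G c i)]
    omega
  | succ n ih =>
    intro c hp hd hΦ
    obtain ⟨i₀, _, hmax⟩ := Finset.exists_max_image Finset.univ (mcount G c) ⟨_, Finset.mem_univ (Classical.arbitrary (Fin k))⟩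
    obtain ⟨j₀, _, hmin⟩ := Finset.exists_min_image Finset.univ (mcount G c) ⟨_, Finset.mem_univ (Classical.arbitrary (Fin k))⟩
    by_cases hgap : mcount G c j₀ + 3 ≤ mcount G c i₀
    · have hij : i₀ ≠ j₀ := by
        intro h
        rw [h] at hgap
        omega
      obtain ⟨c', hp', hd', h1, h2, h3⟩ := swap_lemma G c F hF hp hd hij hgap
      apply ih c' hp' hd'
      -- potential drops
      have hsum : ∀ (f : Fin k → ℕ), (∑ l : Fin k, f l)
          = f i₀ + f j₀ + ∑ l ∈ (Finset.univ.erase i₀).erase j₀, f l := by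
        intro f
        rw [← Finset.add_sum_erase _ f (Finset.mem_univ i₀)]
        rw [← Finset.add_sum_erase _ f (Finset.mem_erase.2 ⟨fun h => hij h.symm, Finset.mem_univ j₀⟩)]
        ring
      have hrest : ∑ l ∈ (Finset.univ.erase i₀).erase j₀, (mcount G c' l) ^ 2
          = ∑ l ∈ (Finset.univ.erase i₀).erase j₀, (mcount G c l) ^ 2 := by
        apply Finset.sum_congr rfl
        intro l hl
        rw [Finset.mem_erase, Finset.mem_erase] at hl
        rw [h3 l hl.2.1 hl.1]
      have hlt : (∑ l : Fin k, (mcount G c' l) ^ 2) < ∑ l : Fin k, (mcount G c l) ^ 2 := by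
        rw [hsum (fun l => (mcount G c' l) ^ 2), hsum (fun l => (mcount G c l) ^ 2), hrest]
        have hgap' : mcount G c' j₀ + 2 ≤ mcount G c' i₀ + 1 := by omega
        nlinarith [h1, h2, hgap]
      omega
    · refine ⟨c, hp, hd, fun i j => ?_⟩
      have h1 := hmax i (Finset.mem_univ i)
      have h2 := hmin j (Finset.mem_univ j)
      omega

end AuxWeaklyEquitable

/-- If `G` has a proper `k`-edge-coloring (`k ≥ Δ(G)`) in which all edges of `F` get
distinct colors, then it has such a coloring in which, in addition, the numbers of
vertices missing any two colors differ by at most `5`. -/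
theorem weakly_equitable_edge_coloring {V : Type*} [Fintype V] [DecidableEq V]
    (G : SimpleGraph V) [DecidableRel G.Adj] (k : ℕ) (hk : G.maxDegree ≤ k)
    (F : Finset (Sym2 V)) (hF : F ⊆ G.edgeFinset)
    (c₀ : Sym2 V → Fin k)
    (hp₀ : ∀ u v w, G.Adj u v → G.Adj u w → v ≠ w → c₀ s(u, v) ≠ c₀ s(u, w))
    (hd₀ : ∀ e ∈ F, ∀ f ∈ F, e ≠ f → c₀ e ≠ c₀ f) :
    ∃ c : Sym2 V → Fin k,
      (∀ u v w, G.Adj u v → G.Adj u w → v ≠ w → c s(u, v) ≠ c s(u, w)) ∧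
      (∀ e ∈ F, ∀ f ∈ F, e ≠ f → c e ≠ c f) ∧
      ∀ i j : Fin k,
        |((Finset.univ.filter fun v => ∀ w, G.Adj v w → c s(v, w) ≠ i).card : ℤ)
          - ((Finset.univ.filter fun v => ∀ w, G.Adj v w → c s(v, w) ≠ j).card : ℤ)| ≤ 5 := by
  obtain ⟨c, hp, hd, hbal⟩ := balance G F hF c₀ hp₀ hd₀
  refine ⟨c, hp, hd, fun i j => ?_⟩
  have h1 := missing_count G c i hp
  have h2 := missing_count G c j hp
  have h3 := hbal i j
  have h4 := hbal j i
  rw [abs_le]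
  constructor <;> omega
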